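/- Reich's theorem (sufficiency): let A be a real symmetric (n+1)×(n+1) matrix with all diagonal entries positive, and suppose A is positive definite (Re(x* A x) > 0 for all nonzero complex vectors x, where A is viewed as a complex matrix). Write A = A₁ + A₂ where A₁ is the lower triangular part of A (including the diagonal) and A₂ is the strictly upper triangular part. Then every eigenvalue μ of the Gauss–Seidel iteration matrix −A₁⁻¹A₂ satisfies |μ| < 1. -/

import Mathlib

open Matrix in

theorem Reich_sufficiency (n : ℕ) (A : Matrix (Fin (n + 1)) (Fin (n + 1)) ℝ)
    (hdiag : ∀ i, 0 < A i i)
    (hsym : ∀ i j, A i j = A j i)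
    (hpd : ∀ x : Fin (n + 1) → ℂ, x ≠ 0 →
      0 < (∑ i, ∑ j, (starRingEnd ℂ) (x i) * (A i j : ℂ) * x j).re)
    (A₁ A₂ : Matrix (Fin (n + 1)) (Fin (n + 1)) ℝ)
    (hA₁ : ∀ i j, A₁ i j = if j ≤ i then A i j else 0)
    (hA₂ : ∀ i j, A₂ i j = if i < j then A i j else 0)
    (μ : ℂ) (v : Fin (n + 1) → ℂ) (hv : v ≠ 0)
    (heig : (-((A₁.map (Complex.ofReal))⁻¹ * (A₂.map (Complex.ofReal)))).mulVec v = μ • v) :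
    ‖μ‖ < 1 := by
  set B₁ := A₁.map (Complex.ofReal) with hB₁
  set B₂ := A₂.map (Complex.ofReal) with hB₂
  -- B₁ is invertible
  have hdet : IsUnit B₁.det := by
    have htri : B₁.BlockTriangular OrderDual.toDual := by
      intro i j hij
      have : i < j := hij
      simp [hB₁, Matrix.map_apply, hA₁ i j, not_le.mpr this]
    rw [Matrix.det_of_lowerTriangular B₁ htri, isUnit_iff_ne_zero]
    refine Finset.prod_ne_zero_iff.mpr fun i _ => ?_
    simp only [hB₁, Matrix.map_apply, hA₁ i i, le_refl, if_true]
    exact Complex.ofReal_ne_zero.mpr (ne_of_gt (hdiag i))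
  have hmul : B₁ * B₁⁻¹ = 1 := Matrix.mul_nonsing_inv _ hdet
  -- eigenvalue equation rewritten
  have hstep : B₂ *ᵥ v = (-μ) • (B₁ *ᵥ v) := by
    have h1 := congrArg (fun w => B₁ *ᵥ w) heig
    simp only [Matrix.mulVec_mulVec] at h1
    rw [Matrix.mul_neg, ← Matrix.mul_assoc, hmul, Matrix.one_mul, Matrix.mulVec_smul,
      Matrix.neg_mulVec] at h1
    rw [neg_smul, ← h1, neg_neg]
  set p : ℂ := ∑ i, ∑ j, (starRingEnd ℂ) (v i) * (A₁ i j : ℂ) * v j with hp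
  set q : ℂ := ∑ i, ∑ j, (starRingEnd ℂ) (v i) * (A₂ i j : ℂ) * v j with hq
  set d : ℝ := ∑ i, A i i * Complex.normSq (v i) with hd
  -- d > 0
  obtain ⟨k, hk⟩ : ∃ k, v k ≠ 0 := Function.ne_iff.mp hv
  have hdpos : 0 < d := by
    refine Finset.sum_pos' (fun i _ => mul_nonneg (hdiag i).le (Complex.normSq_nonneg _))
      ⟨k, Finset.mem_univ k, mul_pos (hdiag k) (Complex.normSq_pos.mpr hk)⟩
  -- p + q equals the full quadratic form
  have hpqsum : p + q = ∑ i, ∑ j, (starRingEnd ℂ) (v i) * (A i j : ℂ) * v j := by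
    rw [hp, hq, ← Finset.sum_add_distrib]
    refine Finset.sum_congr rfl fun i _ => ?_
    rw [← Finset.sum_add_distrib]
    refine Finset.sum_congr rfl fun j _ => ?_
    by_cases h : j ≤ i
    · simp [hA₁, hA₂, h, not_lt.mpr h]
    · simp [hA₁, hA₂, h, not_le.mp h]
  have hSpos : 0 < (p + q).re := by rw [hpqsum]; exact hpd v hv
  -- conj p = q + d
  have e1 : (starRingEnd ℂ) p = ∑ i, ∑ j, (starRingEnd ℂ) (v i) * (A₁ j i : ℂ) * v j := by
    rw [hp]
    simp only [map_sum, _root_.map_mul, Complex.conj_conj, Complex.conj_ofReal]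
    rw [Finset.sum_comm]
    exact Finset.sum_congr rfl fun i _ => Finset.sum_congr rfl fun j _ => by ring
  have e2 : ∀ i j : Fin (n + 1), (A₁ j i : ℂ) = (A₂ i j : ℂ) + (if i = j then (A i i : ℂ) else 0) := by
    intro i j
    rcases lt_trichotomy i j with h | h | h
    · simp [hA₁, hA₂, h, h.le, h.ne, hsym j i]
    · subst h; simp [hA₁, hA₂]
    · simp [hA₁, hA₂, not_le.mpr h, lt_asymm h, h.ne']
  have hdc : (d : ℂ) = ∑ i, (starRingEnd ℂ) (v i) * (A i i : ℂ) * v i := by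
    rw [hd]
    push_cast
    refine Finset.sum_congr rfl fun i _ => ?_
    rw [mul_right_comm, mul_comm ((starRingEnd ℂ) (v i)) (v i), Complex.mul_conj]
    ring
  have hcp : (starRingEnd ℂ) p = q + (d : ℂ) := by
    rw [e1, hq, hdc, ← Finset.sum_add_distrib]
    refine Finset.sum_congr rfl fun i _ => ?_
    have hdi : (starRingEnd ℂ) (v i) * (A i i : ℂ) * v i
        = ∑ j, (starRingEnd ℂ) (v i) * (if i = j then (A i i : ℂ) else 0) * v j := by
      rw [Finset.sum_eq_single i]
      · simp
      · intro b _ hb; simp [Ne.symm hb]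
      · simp
    calc ∑ j, (starRingEnd ℂ) (v i) * ((A₁ j i : ℝ) : ℂ) * v j
        = ∑ j, ((starRingEnd ℂ) (v i) * ((A₂ i j : ℝ) : ℂ) * v j
            + (starRingEnd ℂ) (v i) * (if i = j then ((A i i : ℝ) : ℂ) else 0) * v j) :=
          Finset.sum_congr rfl fun j _ => by rw [e2]; ring
      _ = _ := by rw [Finset.sum_add_distrib, hdi]
  -- q = -μ * p
  have hpv : p = ∑ i, (starRingEnd ℂ) (v i) * (B₁ *ᵥ v) i := by
    rw [hp]
    refine Finset.sum_congr rfl fun i _ => ?_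
    simp [Matrix.mulVec, dotProduct, Finset.mul_sum, hB₁, Matrix.map_apply, mul_assoc]
  have hqv : q = ∑ i, (starRingEnd ℂ) (v i) * (B₂ *ᵥ v) i := by
    rw [hq]
    refine Finset.sum_congr rfl fun i _ => ?_
    simp [Matrix.mulVec, dotProduct, Finset.mul_sum, hB₂, Matrix.map_apply, mul_assoc]
  have heq : q = (-μ) * p := by
    rw [hqv, hstep, hpv, Finset.mul_sum]
    exact Finset.sum_congr rfl fun i _ => by simp [Pi.smul_apply, smul_eq_mul]; ring
  -- combine
  have hμp : μ * p = (d : ℂ) - (starRingEnd ℂ) p := by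
    have := hcp
    rw [heq] at this
    linear_combination this
  have hre : d < 2 * p.re := by
    have h1 : q = (starRingEnd ℂ) p - (d : ℂ) := by rw [hcp]; ring
    have h2 : (p + q).re = 2 * p.re - d := by
      rw [h1]
      simp [Complex.add_re, Complex.sub_re, Complex.conj_re, Complex.ofReal_re]
      ring
    rw [h2] at hSpos
    linarith
  have hpne : p ≠ 0 := by
    intro h
    rw [h] at hre
    simp at hre
    linarith
  have hsq : (‖μ * p‖) ^ 2 < (‖p‖) ^ 2 := by
    rw [hμp, Complex.sq_norm, Complex.sq_norm]
    simp only [Complex.normSq_apply, Complex.sub_re, Complex.sub_im, Complex.conj_re,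
      Complex.conj_im, Complex.ofReal_re, Complex.ofReal_im]
    nlinarith
  have habslt : ‖μ * p‖ < ‖p‖ :=
    lt_of_pow_lt_pow_left₀ 2 (norm_nonneg p) hsq
  rw [norm_mul] at habslt
  have hppos : 0 < ‖p‖ := norm_pos_iff.mpr hpne
  nlinarith [norm_nonneg μ]
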